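/- Fix an integer m ≥ 1 and let R = F₂[U, U⁻¹]. With M(m) and ∂ as follows: M(m) is the free R-module with basis x₁,…,x_{2m}, y₁,…,y_{4m−1}, z₁,…,z_{2m}, and u_{p,1}, u_{p,2}, v_{p,1},…,v_{p,4}, w_{p,1}, w_{p,2} for 1 ≤ p ≤ m; ∂x₁ = 0, ∂x_k = y_{k−1} for 2 ≤ k ≤ 2m; ∂y_l = 0 for 1 ≤ l ≤ 2m−1, ∂y_{2m+l−1} = z_l + U·x_l for 1 ≤ l ≤ 2m; ∂z₁ = 0, ∂z_k = U·y_{k−1} for 2 ≤ k ≤ 2m; ∂u_{p,i} = v_{p,i}, ∂v_{p,i} = 0, ∂v_{p,i+2} = w_{p,i} + U·u_{p,i}, ∂w_{p,i} = U·v_{p,i} for i = 1, 2. Then the homology ker ∂ / im ∂ of (M(m), ∂) is a free R-module of rank one, generated by the class of x₁. -/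

import Mathlib

/-!
STATEMENT 13.
Fix m ≥ 1, R = F₂[U, U⁻¹], and let (M(m), ∂) be as in the paper's proof of
Theorem 1.3 (see the hypotheses below; basis conventions as in `Idx`).
Then the homology ker ∂ / im ∂ of (M(m), ∂) is a free R-module of rank one,
generated by the class of x₁.  This is expressed as: im ∂ ⊆ ker ∂, x₁ ∈ ker ∂,
ker ∂ = im ∂ ⊔ R·x₁ (the class of x₁ generates the homology), and
r·x₁ ∈ im ∂ implies r = 0 (the class of x₁ is R-free).
-/

/-- Basis index type of the module M(m) (0-based indices: `Idx.x k` is x_{k+1}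
for `k : Fin (2m)`, `Idx.y l` is y_{l+1} for `l : Fin (4m−1)`, `Idx.z k` is
z_{k+1}, `Idx.u p i` is u_{p+1,i+1}, `Idx.v p i` is v_{p+1,i+1}, `Idx.w p i`
is w_{p+1,i+1}). -/
inductive Idx (m : ℕ) where
  | x : Fin (2 * m) → Idx m
  | y : Fin (4 * m - 1) → Idx m
  | z : Fin (2 * m) → Idx m
  | u : Fin m → Fin 2 → Idx m
  | v : Fin m → Fin 4 → Idx m
  | w : Fin m → Fin 2 → Idx m
  deriving DecidableEq

/-- The ground ring R = F₂[U, U⁻¹]. -/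
abbrev R2 : Type := LaurentPolynomial (ZMod 2)

/-- The element U ∈ R. -/
noncomputable def U : R2 := LaurentPolynomial.T 1

/-- The basis vector of the free module `Idx m →₀ R2` at index `i`. -/
noncomputable def e {m : ℕ} (i : Idx m) : Idx m →₀ R2 := Finsupp.single i 1

/-! ### Auxiliary machinery: characteristic 2, the homotopy `Hm`, the functional `ell`. -/

lemma R2_two : (2 : R2) = 0 := by
  have h : (2 : LaurentPolynomial (ZMod 2)) = LaurentPolynomial.C 2 := by
    rw [show (2 : LaurentPolynomial (ZMod 2)) = 1 + 1 from by ring,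
        show (2 : ZMod 2) = 1 + 1 from by decide, map_add, map_one]
  rw [h, show (2:ZMod 2) = 0 by decide, map_zero]

lemma addself {M : Type*} [AddCommMonoid M] [Module R2 M] (v : M) : v + v = 0 := by
  have h : (2 : R2) • v = 0 := by rw [R2_two, zero_smul]
  rwa [two_smul] at h

/-- Values of the homotopy on the basis. -/
noncomputable def Hb (m : ℕ) : Idx m → (Idx m →₀ R2)
  | .x _ => 0
  | .y l => if h : l.val + 1 < 2 * m then e (.x ⟨l.val + 1, h⟩) else 0
  | .z k => e (.y ⟨2 * m - 1 + k.val, by have := k.isLt; omega⟩)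
  | .u _ _ => 0
  | .v p i => if h : i.val < 2 then e (.u p ⟨i.val, h⟩) else 0
  | .w p i => e (.v p ⟨i.val + 2, by have := i.isLt; omega⟩)

/-- The homotopy operator. -/
noncomputable def Hm (m : ℕ) : (Idx m →₀ R2) →ₗ[R2] (Idx m →₀ R2) :=
  Finsupp.linearCombination R2 (Hb m)

lemma Hm_e {m : ℕ} (i : Idx m) : Hm m (e i) = Hb m i := by
  simp [Hm, e, Finsupp.linearCombination_single]

lemma Hb_x {m : ℕ} (k : Fin (2 * m)) : Hb m (.x k) = 0 := rfl
lemma Hb_y_lt {m : ℕ} (l : Fin (4 * m - 1)) (h : l.val + 1 < 2 * m) :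
    Hb m (.y l) = e (.x ⟨l.val + 1, h⟩) := dif_pos h
lemma Hb_y_ge {m : ℕ} (l : Fin (4 * m - 1)) (h : ¬ l.val + 1 < 2 * m) :
    Hb m (.y l) = 0 := dif_neg h
lemma Hb_z {m : ℕ} (k : Fin (2 * m)) :
    Hb m (.z k) = e (.y ⟨2 * m - 1 + k.val, by have := k.isLt; omega⟩) := rfl
lemma Hb_u {m : ℕ} (p : Fin m) (i : Fin 2) : Hb m (.u p i) = 0 := rfl
lemma Hb_v_lt {m : ℕ} (p : Fin m) (i : Fin 4) (h : i.val < 2) :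
    Hb m (.v p i) = e (.u p ⟨i.val, h⟩) := dif_pos h
lemma Hb_v_ge {m : ℕ} (p : Fin m) (i : Fin 4) (h : ¬ i.val < 2) :
    Hb m (.v p i) = 0 := dif_neg h
lemma Hb_w {m : ℕ} (p : Fin m) (i : Fin 2) :
    Hb m (.w p i) = e (.v p ⟨i.val + 2, by have := i.isLt; omega⟩) := rfl

/-- The functional `ℓ` = (coefficient of x₁) + U·(coefficient of z₁). -/
noncomputable def ell (m : ℕ) (hm : 1 ≤ m) : (Idx m →₀ R2) →ₗ[R2] R2 :=
  Finsupp.lapply (Idx.x ⟨0, Nat.mul_pos Nat.zero_lt_two hm⟩) + U • Finsupp.lapply (Idx.z ⟨0, Nat.mul_pos Nat.zero_lt_two hm⟩)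

lemma ell_apply {m : ℕ} (hm : 1 ≤ m) (f : Idx m →₀ R2) :
    ell m hm f = f (Idx.x ⟨0, Nat.mul_pos Nat.zero_lt_two hm⟩) + U * f (Idx.z ⟨0, Nat.mul_pos Nat.zero_lt_two hm⟩) := by
  simp [ell, smul_eq_mul]

lemma ell_e_x {m : ℕ} (hm : 1 ≤ m) (k : Fin (2 * m)) (hk : k.val = 0) :
    ell m hm (e (.x k)) = 1 := by
  rw [ell_apply hm]
  simp [e, Finsupp.single_apply, Fin.ext_iff, hk]

lemma ell_e_x' {m : ℕ} (hm : 1 ≤ m) (k : Fin (2 * m)) (hk : k.val ≠ 0) :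
    ell m hm (e (.x k)) = 0 := by
  rw [ell_apply hm]
  simp [e, Finsupp.single_apply, Fin.ext_iff, hk]

lemma ell_e_y {m : ℕ} (hm : 1 ≤ m) (l : Fin (4 * m - 1)) :
    ell m hm (e (.y l)) = 0 := by
  rw [ell_apply hm]; simp [e, Finsupp.single_apply]

lemma ell_e_z {m : ℕ} (hm : 1 ≤ m) (k : Fin (2 * m)) (hk : k.val = 0) :
    ell m hm (e (.z k)) = U := by
  rw [ell_apply hm]
  simp [e, Finsupp.single_apply, Fin.ext_iff, hk]

lemma ell_e_z' {m : ℕ} (hm : 1 ≤ m) (k : Fin (2 * m)) (hk : k.val ≠ 0) :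
    ell m hm (e (.z k)) = 0 := by
  rw [ell_apply hm]
  simp [e, Finsupp.single_apply, Fin.ext_iff, hk]

lemma ell_e_u {m : ℕ} (hm : 1 ≤ m) (p : Fin m) (i : Fin 2) :
    ell m hm (e (.u p i)) = 0 := by
  rw [ell_apply hm]; simp [e, Finsupp.single_apply]

lemma ell_e_v {m : ℕ} (hm : 1 ≤ m) (p : Fin m) (i : Fin 4) :
    ell m hm (e (.v p i)) = 0 := by
  rw [ell_apply hm]; simp [e, Finsupp.single_apply]

lemma ell_e_w {m : ℕ} (hm : 1 ≤ m) (p : Fin m) (i : Fin 2) :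
    ell m hm (e (.w p i)) = 0 := by
  rw [ell_apply hm]; simp [e, Finsupp.single_apply]

set_option maxHeartbeats 2000000 in
theorem stmt_13 (m : ℕ) (hm : 1 ≤ m)
    (bd : (Idx m →₀ R2) →ₗ[R2] (Idx m →₀ R2))
    -- ∂x₁ = 0
    (hx1 : ∀ k : Fin (2 * m), k.val = 0 → bd (e (.x k)) = 0)
    -- ∂x_k = y_{k−1} for 2 ≤ k ≤ 2m (0-based: y-index + 1 = x-index)
    (hx : ∀ (k : Fin (2 * m)) (l : Fin (4 * m - 1)), l.val + 1 = k.val →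
      bd (e (.x k)) = e (.y l))
    -- ∂y_l = 0 for 1 ≤ l ≤ 2m−1 (0-based: l.val + 1 ≤ 2m − 1)
    (hy0 : ∀ l : Fin (4 * m - 1), l.val + 2 ≤ 2 * m → bd (e (.y l)) = 0)
    -- ∂y_{2m+l−1} = z_l + U·x_l for 1 ≤ l ≤ 2m
    (hy : ∀ (l : Fin (4 * m - 1)) (k : Fin (2 * m)), l.val + 1 = 2 * m + k.val →
      bd (e (.y l)) = e (.z k) + U • e (.x k))
    -- ∂z₁ = 0
    (hz1 : ∀ k : Fin (2 * m), k.val = 0 → bd (e (.z k)) = 0)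
    -- ∂z_k = U·y_{k−1} for 2 ≤ k ≤ 2m
    (hz : ∀ (k : Fin (2 * m)) (l : Fin (4 * m - 1)), l.val + 1 = k.val →
      bd (e (.z k)) = U • e (.y l))
    -- ∂u_{p,i} = v_{p,i} for i = 1, 2
    (hu : ∀ (p : Fin m) (i : Fin 2) (i' : Fin 4), i'.val = i.val →
      bd (e (.u p i)) = e (.v p i'))
    -- ∂v_{p,i} = 0 for i = 1, 2
    (hv0 : ∀ (p : Fin m) (i : Fin 4), i.val < 2 → bd (e (.v p i)) = 0)
    -- ∂v_{p,i+2} = w_{p,i} + U·u_{p,i} for i = 1, 2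
    (hv : ∀ (p : Fin m) (i : Fin 4) (i' : Fin 2), i.val = i'.val + 2 →
      bd (e (.v p i)) = e (.w p i') + U • e (.u p i'))
    -- ∂w_{p,i} = U·v_{p,i} for i = 1, 2
    (hw : ∀ (p : Fin m) (i : Fin 2) (i' : Fin 4), i'.val = i.val →
      bd (e (.w p i)) = U • e (.v p i'))
    :
    LinearMap.range bd ≤ LinearMap.ker bd ∧
    e (.x ⟨0, by omega⟩) ∈ LinearMap.ker bd ∧
    LinearMap.ker bd =
      LinearMap.range bd ⊔ Submodule.span R2 {e (.x ⟨0, by omega⟩)} ∧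
    (∀ r : R2, r • e (.x ⟨0, by omega⟩) ∈ LinearMap.range bd → r = 0) := by
  have h0 : (0:ℕ) < 2 * m := by omega
  set x1i : Idx m := Idx.x ⟨0, h0⟩ with hx1i
  -- ∂² = 0 on basis vectors
  have keysq : ∀ i : Idx m, bd (bd (e i)) = 0 := by
    intro i
    cases i with
    | x k =>
      by_cases hk : k.val = 0
      · rw [hx1 k hk, map_zero]
      · have hkl : k.val - 1 < 4 * m - 1 := by have := k.isLt; omega
        rw [hx k ⟨k.val - 1, hkl⟩ (show k.val - 1 + 1 = k.val by omega)]
        exact hy0 _ (show k.val - 1 + 2 ≤ 2 * m from by have := k.isLt; omega)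
    | y l =>
      by_cases hl : l.val + 1 < 2 * m
      · rw [hy0 l (by omega), map_zero]
      · have hkv : l.val - (2 * m - 1) < 2 * m := by have := l.isLt; omega
        have hll := l.isLt
        set k : Fin (2 * m) := ⟨l.val - (2 * m - 1), hkv⟩ with hkdef
        rw [hy l k (show l.val + 1 = 2 * m + (l.val - (2 * m - 1)) by omega),
            map_add, map_smul]
        by_cases hk0 : k.val = 0
        · rw [hz1 k hk0, hx1 k hk0, smul_zero, add_zero]
        · have hkl : k.val - 1 < 4 * m - 1 := by have := k.isLt; omega
          rw [hz k ⟨k.val - 1, hkl⟩ (show k.val - 1 + 1 = k.val by omega),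
              hx k ⟨k.val - 1, hkl⟩ (show k.val - 1 + 1 = k.val by omega)]
          exact addself _
    | z k =>
      by_cases hk : k.val = 0
      · rw [hz1 k hk, map_zero]
      · have hkl : k.val - 1 < 4 * m - 1 := by have := k.isLt; omega
        rw [hz k ⟨k.val - 1, hkl⟩ (show k.val - 1 + 1 = k.val by omega), map_smul,
            hy0 _ (show k.val - 1 + 2 ≤ 2 * m from by have := k.isLt; omega),
            smul_zero]
    | u p i =>
      rw [hu p i ⟨i.val, by have := i.isLt; omega⟩ rfl]
      exact hv0 p _ (show i.val < 2 from i.isLt)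
    | v p i =>
      by_cases hi : i.val < 2
      · rw [hv0 p i hi, map_zero]
      · have hj : i.val - 2 < 2 := by have := i.isLt; omega
        rw [hv p i ⟨i.val - 2, hj⟩ (show i.val = i.val - 2 + 2 from by
              have := i.isLt; omega), map_add, map_smul,
            hw p ⟨i.val - 2, hj⟩ ⟨i.val - 2, by have := i.isLt; omega⟩ rfl,
            hu p ⟨i.val - 2, hj⟩ ⟨i.val - 2, by have := i.isLt; omega⟩ rfl]
        exact addself _
    | w p i =>
      rw [hw p i ⟨i.val, by have := i.isLt; omega⟩ rfl, map_smul,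
          hv0 p _ (show i.val < 2 from i.isLt), smul_zero]
  -- the homotopy identity on basis vectors
  have key : ∀ i : Idx m,
      bd (Hm m (e i)) + Hm m (bd (e i)) + ell m hm (e i) • e x1i = e i := by
    intro i
    cases i with
    | x k =>
      by_cases hk : k.val = 0
      · rw [hx1 k hk, map_zero, Hm_e, Hb_x, map_zero, ell_e_x hm k hk, one_smul,
            zero_add, zero_add]
        have : k = ⟨0, h0⟩ := Fin.ext hk
        rw [this]
      · have hkl : k.val - 1 < 4 * m - 1 := by have := k.isLt; omega
        rw [hx k ⟨k.val - 1, hkl⟩ (show k.val - 1 + 1 = k.val by omega), Hm_e,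
            Hb_x, map_zero, Hm_e,
            Hb_y_lt _ (show k.val - 1 + 1 < 2 * m from by have := k.isLt; omega),
            ell_e_x' hm k hk, zero_smul, add_zero, zero_add]
        exact congrArg e (congrArg Idx.x (Fin.ext (show k.val - 1 + 1 = k.val
          by omega)))
    | y l =>
      by_cases hl : l.val + 1 < 2 * m
      · rw [hy0 l (by omega), map_zero, Hm_e, Hb_y_lt l hl,
            hx ⟨l.val + 1, hl⟩ l rfl, ell_e_y hm l, zero_smul, add_zero, add_zero]
      · have hkv : l.val - (2 * m - 1) < 2 * m := by have := l.isLt; omega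
        have hll := l.isLt
        set k : Fin (2 * m) := ⟨l.val - (2 * m - 1), hkv⟩ with hkdef
        rw [hy l k (show l.val + 1 = 2 * m + (l.val - (2 * m - 1)) by omega),
            Hm_e, Hb_y_ge l hl, map_zero, map_add,
            map_smul, Hm_e, Hm_e, Hb_z, Hb_x, smul_zero, add_zero,
            ell_e_y hm l, zero_smul, add_zero, zero_add]
        exact congrArg e (congrArg Idx.y (Fin.ext
          (show 2 * m - 1 + (l.val - (2 * m - 1)) = l.val by omega)))
    | z k =>
      have hyl : 2 * m - 1 + k.val < 4 * m - 1 := by have := k.isLt; omega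
      have hbdH : bd (Hm m (e (.z k))) = e (.z k) + U • e (.x k) := by
        rw [Hm_e, Hb_z]
        exact hy ⟨2 * m - 1 + k.val, hyl⟩ k
          (show 2 * m - 1 + k.val + 1 = 2 * m + k.val by omega)
      by_cases hk : k.val = 0
      · rw [hz1 k hk, map_zero, hbdH, ell_e_z hm k hk, add_zero]
        have hkk : k = ⟨0, h0⟩ := Fin.ext hk
        rw [hx1i, ← hkk, add_assoc, addself, add_zero]
      · have hkl : k.val - 1 < 4 * m - 1 := by have := k.isLt; omega
        have hlt : k.val - 1 + 1 < 2 * m := by have := k.isLt; omega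
        rw [hz k ⟨k.val - 1, hkl⟩ (show k.val - 1 + 1 = k.val by omega), hbdH,
            map_smul, Hm_e, Hb_y_lt _ hlt, ell_e_z' hm k hk, zero_smul, add_zero]
        have hxx : (Idx.x ⟨k.val - 1 + 1, hlt⟩ : Idx m)
            = Idx.x k := congrArg Idx.x (Fin.ext (show k.val - 1 + 1 = k.val
              by omega))
        rw [hxx, add_assoc, addself, add_zero]
    | u p i =>
      rw [hu p i ⟨i.val, by have := i.isLt; omega⟩ rfl, Hm_e, Hb_u, map_zero, Hm_e,
          Hb_v_lt p _ (show i.val < 2 from i.isLt), ell_e_u hm p i, zero_smul,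
          add_zero, zero_add]
    | v p i =>
      by_cases hi : i.val < 2
      · rw [hv0 p i hi, map_zero, Hm_e, Hb_v_lt p i hi,
            hu p ⟨i.val, hi⟩ i rfl, ell_e_v hm p i, zero_smul, add_zero, add_zero]
      · have hj : i.val - 2 < 2 := by have := i.isLt; omega
        rw [hv p i ⟨i.val - 2, hj⟩ (show i.val = i.val - 2 + 2 from by
              have := i.isLt; omega), Hm_e, Hb_v_ge p i hi, map_zero,
            map_add, map_smul, Hm_e, Hm_e, Hb_w, Hb_u, smul_zero, add_zero,
            ell_e_v hm p i, zero_smul, add_zero, zero_add]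
        exact congrArg e (congrArg (Idx.v p) (Fin.ext
          (show i.val - 2 + 2 = i.val from by have := i.isLt; omega)))
    | w p i =>
      rw [hw p i ⟨i.val, by have := i.isLt; omega⟩ rfl, Hm_e, Hb_w,
          hv p ⟨i.val + 2, by have := i.isLt; omega⟩ i rfl, map_smul, Hm_e,
          Hb_v_lt p _ (show i.val < 2 from i.isLt), ell_e_w hm p i, zero_smul,
          add_zero]
      have huu : (Idx.u p ⟨i.val, by have := i.isLt; omega⟩ : Idx m) = Idx.u p i := by
        congr 1
      rw [huu, add_assoc, addself, add_zero]
  -- globalize by linearity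
  have hbd2 : ∀ f, bd (bd f) = 0 := by
    have hcomp : bd ∘ₗ bd = 0 := by
      apply Finsupp.lhom_ext'
      intro i
      apply LinearMap.ext_ring
      simpa [e] using keysq i
    intro f
    exact LinearMap.congr_fun hcomp f
  have hhom : ∀ f, bd (Hm m f) + Hm m (bd f) + ell m hm f • e x1i = f := by
    have hcomp : bd ∘ₗ Hm m + Hm m ∘ₗ bd + (ell m hm).smulRight (e x1i)
        = LinearMap.id := by
      apply Finsupp.lhom_ext'
      intro i
      apply LinearMap.ext_ring
      simpa [e] using key i
    intro f
    simpa using LinearMap.congr_fun hcomp f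
  have hbdx1 : bd (e x1i) = 0 := hx1 _ rfl
  have hellbd : ∀ f, ell m hm (bd f) = 0 := by
    intro f
    have h1 : bd (Hm m (bd f)) = bd f := by
      have := congrArg bd (hhom f)
      rw [map_add, map_add, map_smul, hbd2 (Hm m f), hbdx1, smul_zero, add_zero,
          zero_add] at this
      exact this
    have h2 := hhom (bd f)
    rw [h1, hbd2 f, map_zero, add_zero] at h2
    have h3 : ell m hm (bd f) • e x1i = 0 :=
      add_left_cancel (a := bd f) (by rw [add_zero]; exact h2)
    have h4 : Finsupp.single x1i (ell m hm (bd f)) = 0 := by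
      rw [← h3]; simp [e, Finsupp.smul_single]
    exact Finsupp.single_eq_zero.mp h4
  have hellx1 : ell m hm (e x1i) = 1 := ell_e_x hm _ rfl
  refine ⟨?_, ?_, ?_, ?_⟩
  · rintro f ⟨g, rfl⟩
    exact LinearMap.mem_ker.mpr (hbd2 g)
  · exact LinearMap.mem_ker.mpr hbdx1
  · apply le_antisymm
    · intro f hf
      have hf0 : bd f = 0 := LinearMap.mem_ker.mp hf
      have hfe : f = bd (Hm m f) + ell m hm f • e x1i := by
        have := hhom f
        rw [hf0, map_zero, add_zero] at this
        exact this.symm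
      rw [hfe]
      exact Submodule.add_mem_sup (LinearMap.mem_range_self bd (Hm m f))
        (Submodule.smul_mem _ _ (Submodule.mem_span_singleton_self _))
    · refine sup_le ?_ ?_
      · rintro f ⟨g, rfl⟩
        exact LinearMap.mem_ker.mpr (hbd2 g)
      · rw [Submodule.span_singleton_le_iff_mem]
        exact LinearMap.mem_ker.mpr hbdx1
  · rintro r ⟨g, hg⟩
    have := hellbd g
    rw [hg, map_smul, hellx1, smul_eq_mul, mul_one] at this
    exact this
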